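/- Stationary distribution lower bound under a mixed policy: let π = (1−ε)π_tgt + ε π_u be a mixture of a target policy with the uniform policy, ε ∈ (0,1], and let P_u be the state transition matrix under the uniform policy. If η_k = min_{s,s'} P_u^k(s'|s) > 0 for some k₀, then any stationary distribution d of the chain induced by π satisfies d(s) ≥ ε^{k₀} η_{k₀} for all states s. -/
import Mathlib


open Matrix

/-- Stationary distribution lower bound under a mixed policy
`π = (1−ε)π_tgt + ε π_u`: if `η_{k₀} = min_{s,s'} P_u^{k₀}(s'|s) > 0`, then any
stationary distribution `d` of the chain induced by `π` satisfies
`d(s) ≥ ε^{k₀} η_{k₀}` for all `s`. -/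
theorem stationary_lower_bound_mixed_policy
    {S A : Type*} [Fintype S] [DecidableEq S] [Fintype A] [Nonempty S] [Nonempty A]
    (P : S → A → S → ℝ) (πtgt : S → A → ℝ) (ε : ℝ) (k₀ : ℕ)
    (hε : ε ∈ Set.Ioc (0:ℝ) 1)
    (hPnn : ∀ s a s', 0 ≤ P s a s') (hPsum : ∀ s a, ∑ s', P s a s' = 1)
    (hπnn : ∀ s a, 0 ≤ πtgt s a) (hπsum : ∀ s, ∑ a, πtgt s a = 1)
    (Pu : Matrix S S ℝ)
    (hPu : ∀ s s', Pu s s' = (1 / (Fintype.card A : ℝ)) * ∑ a, P s a s')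
    (Pπ : S → S → ℝ)
    (hPπ : ∀ s s', Pπ s s' =
      ∑ a, ((1 - ε) * πtgt s a + ε / (Fintype.card A : ℝ)) * P s a s')
    (d : S → ℝ) (hdnn : ∀ s, 0 ≤ d s) (hdsum : ∑ s, d s = 1)
    (hstat : ∀ s', d s' = ∑ s, d s * Pπ s s')
    (η : ℝ) (hη : η = ⨅ p : S × S, (Pu ^ k₀) p.1 p.2) (hηpos : 0 < η) :
    ∀ s : S, ε ^ k₀ * η ≤ d s := by
  obtain ⟨hε0, hε1⟩ := hε
  have hcard : (0:ℝ) < (Fintype.card A : ℝ) := by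
    exact_mod_cast Fintype.card_pos
  have hPu_nn : ∀ s s', 0 ≤ Pu s s' := by
    intro s s'
    rw [hPu]
    exact mul_nonneg (by positivity) (Finset.sum_nonneg fun a _ => hPnn s a s')
  have hPuk_nn : ∀ k s s', 0 ≤ (Pu ^ k) s s' := by
    intro k
    induction k with
    | zero =>
      intro s s'
      rw [pow_zero]
      by_cases h : s = s' <;> simp [Matrix.one_apply, h]
    | succ k ih =>
      intro s s'
      rw [pow_succ, Matrix.mul_apply]
      exact Finset.sum_nonneg fun t _ => mul_nonneg (ih s t) (hPu_nn t s')
  have hεPu : ∀ s s', ε * Pu s s' ≤ Pπ s s' := by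
    intro s s'
    rw [hPu, hPπ]
    have h1 : ε * (1 / (Fintype.card A : ℝ) * ∑ a, P s a s')
        = ∑ a, ε / (Fintype.card A : ℝ) * P s a s' := by
      rw [Finset.mul_sum, Finset.mul_sum]
      exact Finset.sum_congr rfl fun a _ => by ring
    rw [h1]
    apply Finset.sum_le_sum
    intro a _
    have h2 : 0 ≤ (1 - ε) * πtgt s a * P s a s' :=
      mul_nonneg (mul_nonneg (by linarith) (hπnn s a)) (hPnn s a s')
    nlinarith [hPnn s a s']
  have key : ∀ k s', ε ^ k * ∑ s, d s * (Pu ^ k) s s' ≤ d s' := by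
    intro k
    induction k with
    | zero =>
      intro s'
      rw [pow_zero, pow_zero, one_mul]
      simp [Matrix.one_apply]
    | succ k ih =>
      intro s'
      have hstep : ε ^ (k + 1) * ∑ s, d s * (Pu ^ (k + 1)) s s'
          = ε * ∑ t, (ε ^ k * ∑ s, d s * (Pu ^ k) s t) * Pu t s' := by
        simp only [pow_succ, Matrix.mul_apply, Finset.mul_sum, Finset.sum_mul]
        rw [Finset.sum_comm]
        exact Finset.sum_congr rfl fun t _ => Finset.sum_congr rfl fun s _ => by ring
      rw [hstep]
      calc ε * ∑ t, (ε ^ k * ∑ s, d s * (Pu ^ k) s t) * Pu t s'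
          ≤ ε * ∑ t, d t * Pu t s' := by
            apply mul_le_mul_of_nonneg_left _ (le_of_lt hε0)
            exact Finset.sum_le_sum fun t _ =>
              mul_le_mul_of_nonneg_right (ih t) (hPu_nn t s')
        _ ≤ ∑ t, d t * Pπ t s' := by
            rw [Finset.mul_sum]
            apply Finset.sum_le_sum
            intro t _
            calc ε * (d t * Pu t s') = d t * (ε * Pu t s') := by ring
              _ ≤ d t * Pπ t s' :=
                  mul_le_mul_of_nonneg_left (hεPu t s') (hdnn t)
        _ = d s' := (hstat s').symm
  intro s
  have hηle : ∀ t, η ≤ (Pu ^ k₀) t s := by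
    intro t
    rw [hη]
    exact ciInf_le (Finite.bddBelow_range _) (t, s)
  calc ε ^ k₀ * η = ε ^ k₀ * ∑ t, d t * η := by
        rw [← Finset.sum_mul, hdsum, one_mul]
    _ ≤ ε ^ k₀ * ∑ t, d t * (Pu ^ k₀) t s := by
        apply mul_le_mul_of_nonneg_left _ (by positivity)
        exact Finset.sum_le_sum fun t _ =>
          mul_le_mul_of_nonneg_left (hηle t) (hdnn t)
    _ ≤ d s := key k₀ s
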